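/- Fix n : ℕ with n ≥ 1 and let ω = exp(πi/4) ∈ ℂ. Let G_n be the subgroup of invertible linear operators on ℂ^{(Fin n → ZMod 2)} generated by the scalar operator ω • 1 together with: T_i (i : Fin n) with T_i e_x = ω^{(x i).val} • e_x; X_i with X_i e_x = e_{Function.update x i (x i + 1)}; and CNOT_{i,j} (i ≠ j) with CNOT_{i,j} e_x = e_{Function.update x j (x i + x j)}. Then G_n is finite and its cardinality is 2^{3 + 4n + 2·(n choose 2) + (n choose 3)} · ∏_{i=1}^{n} (2^n − 2^{i−1}). -/

import Mathlib

open scoped BigOperators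

noncomputable section

/-- The `n`-qubit state space `ℂ^(Fin n → ZMod 2)`. -/
abbrev QState (n : ℕ) := (Fin n → ZMod 2) → ℂ

/-- The standard basis vector `e x`. -/
def e {n : ℕ} (x : Fin n → ZMod 2) : QState n := Pi.single x 1

/-- `ω = exp (π i / 4)`. -/
def ω : ℂ := Complex.exp (Real.pi * Complex.I / 4)

/-- The generators of the group of `n`-qubit CNOT-dihedral operators: the scalar `ω • 1`,
the `T` gates, the `X` gates, and the `CNOT` gates, each specified by its action on the
standard basis vectors. -/
def dihedralGens (n : ℕ) : Set (LinearMap.GeneralLinearGroup ℂ (QState n)) :=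
  {W | ∀ x, W.val (e x) = ω • e x} ∪
  {W | ∃ i : Fin n, ∀ x, W.val (e x) = ω ^ (x i).val • e x} ∪
  {W | ∃ i : Fin n, ∀ x, W.val (e x) = e (Function.update x i (x i + 1))} ∪
  {W | ∃ i j : Fin n, i ≠ j ∧ ∀ x, W.val (e x) = e (Function.update x j (x i + x j))}

/-- The group `G_n` of `n`-qubit CNOT-dihedral operators. -/
def dihedralGroup' (n : ℕ) : Subgroup (LinearMap.GeneralLinearGroup ℂ (QState n)) :=
  Subgroup.closure (dihedralGens n)

/-- The type of pairs `i < j` in `Fin n`. -/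
abbrev Pair (n : ℕ) := {p : Fin n × Fin n // p.1 < p.2}

/-- The type of triples `i < j < k` in `Fin n`. -/
abbrev Triple (n : ℕ) := {t : Fin n × Fin n × Fin n // t.1 < t.2.1 ∧ t.2.1 < t.2.2}

/-- The phase normal form with data `(a₀, a, b, c)`, as a function
`(Fin n → ZMod 2) → ZMod 8`. Here `⟨·⟩` is realized by casting `.val` into `ZMod 8`. -/
def pnf {n : ℕ} (a₀ : ZMod 8) (a : Fin n → ZMod 8) (b : Pair n → ZMod 4)
    (c : Triple n → ZMod 2) (x : Fin n → ZMod 2) : ZMod 8 :=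
  a₀ + ∑ i : Fin n, a i * ((x i).val : ZMod 8)
    + ∑ p : Pair n, ((b p).val : ZMod 8) * ((x p.val.1 + x p.val.2).val : ZMod 8)
    + ∑ t : Triple n,
        ((c t).val : ZMod 8) * ((x t.val.1 + x t.val.2.1 + x t.val.2.2).val : ZMod 8)

namespace CD


abbrev V (n : ℕ) := Fin n → ZMod 2

lemma omega_pow_eight : ω ^ 8 = 1 := by
  rw [ω, ← Complex.exp_nat_mul]
  rw [show ((8:ℕ) : ℂ) * (Real.pi * Complex.I / 4) = 2 * Real.pi * Complex.I by push_cast; ring]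
  exact Complex.exp_two_pi_mul_I

lemma omega_ne_zero : ω ≠ 0 := Complex.exp_ne_zero _

lemma omega_pow_mod (m : ℕ) : ω ^ (m % 8) = ω ^ m := by
  conv_rhs => rw [← Nat.mod_add_div m 8]
  rw [pow_add, pow_mul, omega_pow_eight, one_pow, mul_one]

lemma omega_pow_eq_one_iff (k : ℕ) : ω ^ k = 1 ↔ 8 ∣ k := by
  constructor
  · intro h
    rw [ω, ← Complex.exp_nat_mul, Complex.exp_eq_one_iff] at h
    obtain ⟨m, hm⟩ := h
    have hπ : (Real.pi : ℂ) ≠ 0 := by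
      exact_mod_cast Real.pi_ne_zero
    have hI : Complex.I ≠ 0 := Complex.I_ne_zero
    have : (k : ℂ) = 8 * m := by
      field_simp at hm
      have h2 : (k : ℂ) * (Real.pi * Complex.I) = (8 * m) * (Real.pi * Complex.I) := by
        ring_nf
        ring_nf at hm
        linear_combination (↑Real.pi * Complex.I) * hm
      exact mul_right_cancel₀ (by simp [hπ, hI]) h2
    have h3 : (k : ℤ) = 8 * m := by exact_mod_cast this
    exact ⟨m.toNat, by omega⟩
  · rintro ⟨j, rfl⟩
    rw [pow_mul, omega_pow_eight, one_pow]

def zeta (k : ZMod 8) : ℂ := ω ^ k.val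

lemma zeta_add (a b : ZMod 8) : zeta (a + b) = zeta a * zeta b := by
  rw [zeta, zeta, zeta, ZMod.val_add, omega_pow_mod, pow_add]

lemma zeta_zero : zeta 0 = 1 := by simp [zeta, ZMod.val_zero]

lemma zeta_ne_zero (a : ZMod 8) : zeta a ≠ 0 := pow_ne_zero _ omega_ne_zero

lemma zeta_inj : Function.Injective zeta := by
  have key : ∀ a b : ZMod 8, a.val ≤ b.val → zeta a = zeta b → a = b := by
    intro a b hle h
    have h1 : ω ^ a.val * ω ^ (b.val - a.val) = ω ^ a.val * 1 := by
      rw [mul_one, ← pow_add]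
      rw [Nat.add_sub_cancel' hle]
      exact h.symm
    have h2 : ω ^ (b.val - a.val) = 1 := mul_left_cancel₀ (pow_ne_zero _ omega_ne_zero) h1
    have h3 : 8 ∣ b.val - a.val := (omega_pow_eq_one_iff _).1 h2
    have ha := ZMod.val_lt a
    have hb := ZMod.val_lt b
    have : a.val = b.val := by omega
    exact ZMod.val_injective _ this
  intro a b h
  rcases le_total a.val b.val with hle | hle
  · exact key a b hle h
  · exact (key b a hle h.symm).symm

variable {n : ℕ}

/-- The diagonal operator with phase function `f`. -/
def Dlin (f : V n → ZMod 8) : QState n →ₗ[ℂ] QState n where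
  toFun v := fun x => zeta (f x) * v x
  map_add' u v := by funext x; simp [mul_add]
  map_smul' c v := by funext x; simp [Pi.smul_apply, smul_eq_mul]; ring

@[simp] lemma Dlin_apply (f : V n → ZMod 8) (v : QState n) (x : V n) :
    Dlin f v x = zeta (f x) * v x := rfl

lemma Dlin_mul (f g : V n → ZMod 8) : Dlin f * Dlin g = Dlin (f + g) := by
  apply LinearMap.ext; intro v; funext x
  simp [Module.End.mul_apply, zeta_add, Pi.add_apply]; ring

lemma Dlin_zero : Dlin (0 : V n → ZMod 8) = 1 := by
  apply LinearMap.ext; intro v; funext x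
  simp [zeta_zero, Module.End.one_apply]

def Dop (f : V n → ZMod 8) : LinearMap.GeneralLinearGroup ℂ (QState n) :=
  ⟨Dlin f, Dlin (-f), by rw [Dlin_mul, add_neg_cancel, Dlin_zero],
    by rw [Dlin_mul, neg_add_cancel, Dlin_zero]⟩

@[simp] lemma Dop_val (f : V n → ZMod 8) : (Dop f).val = Dlin f := rfl

lemma Dop_mul (f g : V n → ZMod 8) : Dop f * Dop g = Dop (f + g) := by
  apply Units.ext; exact Dlin_mul f g

lemma Dop_zero : Dop (0 : V n → ZMod 8) = 1 := by
  apply Units.ext; exact Dlin_zero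

/-- The permutation operator. -/
def Plin (σ : Equiv.Perm (V n)) : QState n →ₗ[ℂ] QState n where
  toFun v := v ∘ σ.symm
  map_add' u v := rfl
  map_smul' c v := rfl

@[simp] lemma Plin_apply (σ : Equiv.Perm (V n)) (v : QState n) (x : V n) :
    Plin σ v x = v (σ.symm x) := rfl

lemma Plin_mul (σ τ : Equiv.Perm (V n)) : Plin σ * Plin τ = Plin (σ * τ) := by
  apply LinearMap.ext; intro v; funext x
  simp only [Module.End.mul_apply, Plin_apply]
  rw [show Equiv.symm (σ * τ) = Equiv.trans σ.symm τ.symm from rfl]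
  rfl

lemma Plin_one : Plin (1 : Equiv.Perm (V n)) = 1 := by
  apply LinearMap.ext; intro v; funext x
  simp [Module.End.one_apply, Equiv.Perm.one_symm]

def Pop (σ : Equiv.Perm (V n)) : LinearMap.GeneralLinearGroup ℂ (QState n) :=
  ⟨Plin σ, Plin σ⁻¹, by rw [Plin_mul, mul_inv_cancel, Plin_one],
    by rw [Plin_mul, inv_mul_cancel, Plin_one]⟩

@[simp] lemma Pop_val (σ : Equiv.Perm (V n)) : (Pop σ).val = Plin σ := rfl

lemma Pop_mul (σ τ : Equiv.Perm (V n)) : Pop σ * Pop τ = Pop (σ * τ) :=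
  Units.ext (Plin_mul σ τ)

lemma Pop_one : Pop (1 : Equiv.Perm (V n)) = 1 := Units.ext Plin_one

lemma Pop_inv (σ : Equiv.Perm (V n)) : (Pop σ)⁻¹ = Pop σ⁻¹ := rfl

lemma Pop_Dop (σ : Equiv.Perm (V n)) (f : V n → ZMod 8) :
    Pop σ * Dop f = Dop (fun x => f (σ.symm x)) * Pop σ := by
  apply Units.ext
  apply LinearMap.ext; intro v; funext x
  simp [Module.End.mul_apply]

lemma Dop_apply_e (f : V n → ZMod 8) (x : V n) :
    (Dop f).val (e x) = zeta (f x) • e x := by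
  funext y
  by_cases h : y = x
  · subst h; simp [e, Pi.single_apply]
  · simp [e, Pi.single_apply, h]

lemma Pop_apply_e (σ : Equiv.Perm (V n)) (x : V n) :
    (Pop σ).val (e x) = e (σ x) := by
  funext y
  simp only [Pop_val, Plin_apply, e, Pi.single_apply]
  congr 1
  rw [eq_iff_iff, Equiv.symm_apply_eq]





/-- cast a bit into `ZMod 8` -/
def bit (u : ZMod 2) : ZMod 8 := (u.val : ZMod 8)

lemma bit_add (u v : ZMod 2) : bit (u + v) = bit u + bit v - 2 * bit u * bit v := by
  revert u v; decide

lemma bit_mul_self (u : ZMod 2) : bit u * bit u = bit u := by revert u; decide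

lemma bit_zero : bit 0 = 0 := by decide
lemma bit_one : bit 1 = 1 := by decide

lemma zmod2_cases (u : ZMod 2) : u = 0 ∨ u = 1 := by revert u; decide

lemma bhom (u v : ZMod 4) :
    (((u + v).val : ZMod 8)) * 2 = ((u.val : ZMod 8)) * 2 + ((v.val : ZMod 8)) * 2 := by
  revert u v; decide

lemma bneg (u : ZMod 4) : (((-u).val : ZMod 8)) * 2 = -(((u.val : ZMod 8)) * 2) := by
  revert u; decide

lemma chom (u v : ZMod 2) :
    (((u + v).val : ZMod 8)) * 4 = ((u.val : ZMod 8)) * 4 + ((v.val : ZMod 8)) * 4 := by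
  revert u v; decide

lemma cneg (u : ZMod 2) : (((-u).val : ZMod 8)) * 4 = -(((u.val : ZMod 8)) * 4) := by
  revert u; decide

variable {n : ℕ}

/-- affine linear form -/
def lf (S : Finset (Fin n)) (ε : ZMod 2) (x : V n) : ZMod 2 := (∑ j ∈ S, x j) + ε

lemma lf_empty (ε : ZMod 2) (x : V n) : lf ∅ ε x = ε := by simp [lf]

lemma lf_insert {a : Fin n} {S : Finset (Fin n)} (h : a ∉ S) (ε : ZMod 2) (x : V n) :
    lf (insert a S) ε x = x a + lf S ε x := by
  simp [lf, Finset.sum_insert h, add_assoc]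

/-- the normal-form parametrization -/
def Phi (a₀ : ZMod 8) (a : Fin n → ZMod 8) (b : Pair n → ZMod 4) (c : Triple n → ZMod 2) :
    V n → ZMod 8 :=
  fun x => a₀ + (∑ i, a i * bit (x i))
    + (∑ p, ((b p).val : ZMod 8) * 2 * (bit (x p.val.1) * bit (x p.val.2)))
    + (∑ t, ((c t).val : ZMod 8) * 4 *
        (bit (x t.val.1) * bit (x t.val.2.1) * bit (x t.val.2.2)))

lemma Phi_add (a₀ a₀' : ZMod 8) (a a' : Fin n → ZMod 8) (b b' : Pair n → ZMod 4)
    (c c' : Triple n → ZMod 2) :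
    Phi (a₀ + a₀') (a + a') (b + b') (c + c') = Phi a₀ a b c + Phi a₀' a' b' c' := by
  funext x
  simp only [Phi, Pi.add_apply]
  have h1 : (∑ i, (a i + a' i) * bit (x i))
      = (∑ i, a i * bit (x i)) + (∑ i, a' i * bit (x i)) := by
    rw [← Finset.sum_add_distrib]
    exact Finset.sum_congr rfl fun i _ => by ring
  have h2 : (∑ p : Pair n, (((b p + b' p).val : ZMod 8)) * 2 * (bit (x p.val.1) * bit (x p.val.2)))
      = (∑ p : Pair n, ((b p).val : ZMod 8) * 2 * (bit (x p.val.1) * bit (x p.val.2)))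
        + (∑ p : Pair n, ((b' p).val : ZMod 8) * 2 * (bit (x p.val.1) * bit (x p.val.2))) := by
    rw [← Finset.sum_add_distrib]
    exact Finset.sum_congr rfl fun p _ => by
      linear_combination (bit (x p.val.1) * bit (x p.val.2)) * bhom (b p) (b' p)
  have h3 : (∑ t : Triple n, (((c t + c' t).val : ZMod 8)) * 4 *
        (bit (x t.val.1) * bit (x t.val.2.1) * bit (x t.val.2.2)))
      = (∑ t : Triple n, ((c t).val : ZMod 8) * 4 *
          (bit (x t.val.1) * bit (x t.val.2.1) * bit (x t.val.2.2)))
        + (∑ t : Triple n, ((c' t).val : ZMod 8) * 4 *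
          (bit (x t.val.1) * bit (x t.val.2.1) * bit (x t.val.2.2))) := by
    rw [← Finset.sum_add_distrib]
    exact Finset.sum_congr rfl fun t _ => by
      linear_combination (bit (x t.val.1) * bit (x t.val.2.1) * bit (x t.val.2.2)) *
        chom (c t) (c' t)
  rw [h1, h2, h3]; ring

lemma Phi_neg (a₀ : ZMod 8) (a : Fin n → ZMod 8) (b : Pair n → ZMod 4) (c : Triple n → ZMod 2) :
    Phi (-a₀) (-a) (-b) (-c) = -Phi a₀ a b c := by
  funext x
  simp only [Phi, Pi.neg_apply]
  have h1 : (∑ i, (-a i) * bit (x i)) = -(∑ i, a i * bit (x i)) := by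
    rw [← Finset.sum_neg_distrib]
    exact Finset.sum_congr rfl fun i _ => by ring
  have h2 : (∑ p : Pair n, (((-b p).val : ZMod 8)) * 2 * (bit (x p.val.1) * bit (x p.val.2)))
      = -(∑ p : Pair n, ((b p).val : ZMod 8) * 2 * (bit (x p.val.1) * bit (x p.val.2))) := by
    rw [← Finset.sum_neg_distrib]
    exact Finset.sum_congr rfl fun p _ => by
      linear_combination (bit (x p.val.1) * bit (x p.val.2)) * bneg (b p)
  have h3 : (∑ t : Triple n, (((-c t).val : ZMod 8)) * 4 *
        (bit (x t.val.1) * bit (x t.val.2.1) * bit (x t.val.2.2)))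
      = -(∑ t : Triple n, ((c t).val : ZMod 8) * 4 *
          (bit (x t.val.1) * bit (x t.val.2.1) * bit (x t.val.2.2))) := by
    rw [← Finset.sum_neg_distrib]
    exact Finset.sum_congr rfl fun t _ => by
      linear_combination (bit (x t.val.1) * bit (x t.val.2.1) * bit (x t.val.2.2)) * cneg (c t)
  rw [h1, h2, h3]; ring

lemma Phi_zero : Phi (0 : ZMod 8) (0 : Fin n → ZMod 8) 0 0 = 0 := by
  funext x; simp [Phi]

/-- The additive group of phase polynomials in normal form. -/
def PS (n : ℕ) : AddSubgroup (V n → ZMod 8) where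
  carrier := {f | ∃ a₀ a b c, f = Phi a₀ a b c}
  add_mem' := by
    rintro f g ⟨a₀, a, b, c, rfl⟩ ⟨a₀', a', b', c', rfl⟩
    exact ⟨_, _, _, _, (Phi_add a₀ a₀' a a' b b' c c').symm⟩
  zero_mem' := ⟨0, 0, 0, 0, Phi_zero.symm⟩
  neg_mem' := by
    rintro f ⟨a₀, a, b, c, rfl⟩
    exact ⟨_, _, _, _, (Phi_neg a₀ a b c).symm⟩

lemma mem_of_eq {f g : V n → ZMod 8} (h : f = g) (hg : g ∈ PS n) : f ∈ PS n := h ▸ hg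

lemma mem_const (a₀ : ZMod 8) : (fun _ : V n => a₀) ∈ PS n := by
  refine ⟨a₀, 0, 0, 0, ?_⟩
  funext x; simp [Phi]

lemma mem_m (i : Fin n) : (fun x : V n => bit (x i)) ∈ PS n := by
  refine ⟨0, Pi.single i 1, 0, 0, ?_⟩
  funext x
  simp [Phi, Pi.single_apply, ite_mul, Finset.sum_ite_eq']

lemma mem_2mm_sorted {i j : Fin n} (h : i < j) :
    (fun x : V n => 2 * (bit (x i) * bit (x j))) ∈ PS n := by
  refine ⟨0, 0, Pi.single ⟨(i, j), h⟩ 1, 0, ?_⟩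
  funext x
  simp only [Phi, Pi.zero_apply, zero_mul, Finset.sum_const_zero, add_zero, zero_add,
    Pi.single_apply, ZMod.val_zero, Nat.cast_zero]
  rw [Finset.sum_congr rfl (fun p _ => by
    rw [show ((((if p = (⟨(i, j), h⟩ : Pair n) then (1 : ZMod 4) else 0)).val : ZMod 8)) * 2 *
          (bit (x p.val.1) * bit (x p.val.2))
        = (if p = (⟨(i, j), h⟩ : Pair n) then 2 * (bit (x p.val.1) * bit (x p.val.2)) else 0) by
      split
      · rw [show (((1 : ZMod 4).val : ZMod 8)) = 1 by decide]; ring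
      · rw [show (((0 : ZMod 4).val : ZMod 8)) = 0 by decide]; ring])]
  rw [Finset.sum_ite_eq' Finset.univ (⟨(i, j), h⟩ : Pair n)
    (fun p => 2 * (bit (x p.val.1) * bit (x p.val.2)))]
  simp

lemma mem_4mmm_sorted {i j k : Fin n} (h1 : i < j) (h2 : j < k) :
    (fun x : V n => 4 * (bit (x i) * bit (x j) * bit (x k))) ∈ PS n := by
  refine ⟨0, 0, 0, Pi.single ⟨(i, j, k), ⟨h1, h2⟩⟩ 1, ?_⟩
  funext x
  simp only [Phi, Pi.zero_apply, zero_mul, Finset.sum_const_zero, add_zero, zero_add,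
    Pi.single_apply, ZMod.val_zero, Nat.cast_zero]
  rw [Finset.sum_congr rfl (fun t _ => by
    rw [show ((((if t = (⟨(i, j, k), ⟨h1, h2⟩⟩ : Triple n) then (1 : ZMod 2) else 0)).val :
          ZMod 8)) * 4 * (bit (x t.val.1) * bit (x t.val.2.1) * bit (x t.val.2.2))
        = (if t = (⟨(i, j, k), ⟨h1, h2⟩⟩ : Triple n) then
            4 * (bit (x t.val.1) * bit (x t.val.2.1) * bit (x t.val.2.2)) else 0) by
      split
      · rw [show (((1 : ZMod 2).val : ZMod 8)) = 1 by decide]; ring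
      · rw [show (((0 : ZMod 2).val : ZMod 8)) = 0 by decide]; ring])]
  rw [Finset.sum_ite_eq' Finset.univ (⟨(i, j, k), ⟨h1, h2⟩⟩ : Triple n)
    (fun t => 4 * (bit (x t.val.1) * bit (x t.val.2.1) * bit (x t.val.2.2)))]
  simp

lemma mem_2mm (i j : Fin n) : (fun x : V n => 2 * (bit (x i) * bit (x j))) ∈ PS n := by
  rcases lt_trichotomy i j with h | h | h
  · exact mem_2mm_sorted h
  · subst h
    exact mem_of_eq (by funext x; simp only [Pi.add_apply]; rw [bit_mul_self]; ring)
      (AddSubgroup.add_mem _ (mem_m i) (mem_m i))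
  · exact mem_of_eq (by funext x; ring) (mem_2mm_sorted h)

lemma mem_4mm (i j : Fin n) : (fun x : V n => 4 * (bit (x i) * bit (x j))) ∈ PS n :=
  mem_of_eq (by funext x; simp only [Pi.add_apply]; ring)
    (AddSubgroup.add_mem _ (mem_2mm i j) (mem_2mm i j))

lemma mem_2m (i : Fin n) : (fun x : V n => 2 * bit (x i)) ∈ PS n :=
  mem_of_eq (by funext x; simp only [Pi.add_apply]; ring)
    (AddSubgroup.add_mem _ (mem_m i) (mem_m i))

lemma mem_4m (i : Fin n) : (fun x : V n => 4 * bit (x i)) ∈ PS n :=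
  mem_of_eq (by funext x; simp only [Pi.add_apply]; ring)
    (AddSubgroup.add_mem _ (mem_2m i) (mem_2m i))

lemma mem_4mmm (i j k : Fin n) :
    (fun x : V n => 4 * (bit (x i) * bit (x j) * bit (x k))) ∈ PS n := by
  rcases eq_or_ne i j with rfl | hij
  · refine mem_of_eq (funext fun x => ?_) (mem_4mm i k)
    linear_combination (4 * bit (x k)) * bit_mul_self (x i)
  rcases eq_or_ne i k with rfl | hik
  · refine mem_of_eq (funext fun x => ?_) (mem_4mm i j)
    linear_combination (4 * bit (x j)) * bit_mul_self (x i)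
  rcases eq_or_ne j k with rfl | hjk
  · refine mem_of_eq (funext fun x => ?_) (mem_4mm i j)
    linear_combination (4 * bit (x i)) * bit_mul_self (x j)
  -- all distinct: sort
  rcases lt_trichotomy i j with h1 | h1 | h1
  · rcases lt_trichotomy j k with h2 | h2 | h2
    · exact mem_4mmm_sorted h1 h2
    · exact absurd h2 hjk
    · rcases lt_trichotomy i k with h3 | h3 | h3
      · exact mem_of_eq (by funext x; ring) (mem_4mmm_sorted h3 h2)
      · exact absurd h3 hik
      · exact mem_of_eq (by funext x; ring) (mem_4mmm_sorted h3 h1)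
  · exact absurd h1 hij
  · rcases lt_trichotomy i k with h2 | h2 | h2
    · exact mem_of_eq (by funext x; ring) (mem_4mmm_sorted h1 h2)
    · exact absurd h2 hik
    · rcases lt_trichotomy j k with h3 | h3 | h3
      · exact mem_of_eq (by funext x; ring) (mem_4mmm_sorted h3 h2)
      · exact absurd h3 hjk
      · exact mem_of_eq (by funext x; ring) (mem_4mmm_sorted h3 h1)

/-- The master reduction lemma. -/
lemma red (k : ZMod 8) (G : V n → ZMod 8)
    (hconst : (fun x => k * G x) ∈ PS n)
    (hvar : ∀ a, (fun x => k * bit (x a) * G x) ∈ PS n)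
    (hcross : ∀ (a : Fin n) (S : Finset (Fin n)) (ε : ZMod 2),
      (fun x => 2 * k * bit (x a) * bit (lf S ε x) * G x) ∈ PS n) :
    ∀ (S : Finset (Fin n)) (ε : ZMod 2), (fun x => k * bit (lf S ε x) * G x) ∈ PS n := by
  intro S
  induction S using Finset.induction_on with
  | empty =>
    intro ε
    rcases zmod2_cases ε with h | h <;> subst h
    · exact mem_of_eq (by funext x; rw [lf_empty, bit_zero]; simp) (AddSubgroup.zero_mem _)
    · exact mem_of_eq (by funext x; rw [lf_empty, bit_one]; ring) hconst
  | @insert a S ha ih =>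
    intro ε
    have key : (fun x => k * bit (lf (insert a S) ε x) * G x)
        = (fun x => k * bit (x a) * G x) + (fun x => k * bit (lf S ε x) * G x)
          + (-(fun x => 2 * k * bit (x a) * bit (lf S ε x) * G x)) := by
      funext x
      simp only [Pi.add_apply, Pi.neg_apply]
      rw [lf_insert ha, bit_add]
      ring
    rw [key]
    exact AddSubgroup.add_mem _ (AddSubgroup.add_mem _ (hvar a) (ih ε))
      (AddSubgroup.neg_mem _ (hcross a S ε))

lemma cross_trivial_4 (G : V n → ZMod 8) (a : Fin n) (S : Finset (Fin n)) (ε : ZMod 2) :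
    (fun x : V n => 2 * 4 * bit (x a) * bit (lf S ε x) * G x) ∈ PS n := by
  refine mem_of_eq ?_ (AddSubgroup.zero_mem _)
  funext x
  rw [show (2 * 4 : ZMod 8) = 0 by decide]
  simp

-- degree 1, coefficient 4
lemma L4_1 (S : Finset (Fin n)) (ε : ZMod 2) : (fun x : V n => 4 * bit (lf S ε x)) ∈ PS n := by
  have := red (n := n) 4 (fun _ => 1)
    (mem_of_eq (by funext x; ring) (mem_const 4))
    (fun a => mem_of_eq (by funext x; ring) (mem_4m a))
    (fun a S ε => cross_trivial_4 _ a S ε) S ε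
  exact mem_of_eq (by funext x; ring) this

lemma L4_v1 (a : Fin n) (S : Finset (Fin n)) (ε : ZMod 2) :
    (fun x : V n => 4 * bit (x a) * bit (lf S ε x)) ∈ PS n := by
  have := red (n := n) 4 (fun x => bit (x a))
    (mem_of_eq (by funext x; beta_reduce; ring) (mem_4m a))
    (fun b => mem_of_eq (by funext x; beta_reduce; ring) (mem_4mm b a))
    (fun b S' ε' => mem_of_eq (by funext x; beta_reduce; ring) (cross_trivial_4 (fun x => bit (x a)) b S' ε')) S ε
  exact mem_of_eq (by funext x; beta_reduce; ring) this

lemma L4_2 (S : Finset (Fin n)) (ε : ZMod 2) (S' : Finset (Fin n)) (ε' : ZMod 2) :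
    (fun x : V n => 4 * bit (lf S ε x) * bit (lf S' ε' x)) ∈ PS n := by
  have := red (n := n) 4 (fun x => bit (lf S' ε' x))
    (mem_of_eq (by funext x; beta_reduce; ring) (L4_1 S' ε'))
    (fun a => mem_of_eq (by funext x; beta_reduce; ring) (L4_v1 a S' ε'))
    (fun a S'' ε'' => mem_of_eq (by funext x; beta_reduce; ring)
      (cross_trivial_4 (fun x => bit (lf S' ε' x)) a S'' ε'')) S ε
  exact mem_of_eq (by funext x; beta_reduce; ring) this

lemma L4_vv (a b : Fin n) (S : Finset (Fin n)) (ε : ZMod 2) :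
    (fun x : V n => 4 * bit (x a) * bit (x b) * bit (lf S ε x)) ∈ PS n := by
  have := red (n := n) 4 (fun x => bit (x a) * bit (x b))
    (mem_of_eq (by funext x; beta_reduce; ring) (mem_4mm a b))
    (fun c => mem_of_eq (by funext x; beta_reduce; ring) (mem_4mmm c a b))
    (fun c S' ε' => mem_of_eq (by funext x; beta_reduce; ring)
      (cross_trivial_4 (fun x => bit (x a) * bit (x b)) c S' ε')) S ε
  exact mem_of_eq (by funext x; beta_reduce; ring) this

lemma L4_v2 (a : Fin n) (S : Finset (Fin n)) (ε : ZMod 2) (S' : Finset (Fin n)) (ε' : ZMod 2) :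
    (fun x : V n => 4 * bit (x a) * bit (lf S ε x) * bit (lf S' ε' x)) ∈ PS n := by
  have := red (n := n) 4 (fun x => bit (x a) * bit (lf S' ε' x))
    (mem_of_eq (by funext x; beta_reduce; ring) (L4_v1 a S' ε'))
    (fun b => mem_of_eq (by funext x; beta_reduce; ring) (L4_vv b a S' ε'))
    (fun b S'' ε'' => cross_trivial_4 (fun x => bit (x a) * bit (lf S' ε' x)) b S'' ε'') S ε
  exact mem_of_eq (by funext x; beta_reduce; ring) this

lemma L4_3 (S : Finset (Fin n)) (ε : ZMod 2) (S' : Finset (Fin n)) (ε' : ZMod 2)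
    (S'' : Finset (Fin n)) (ε'' : ZMod 2) :
    (fun x : V n => 4 * bit (lf S ε x) * bit (lf S' ε' x) * bit (lf S'' ε'' x)) ∈ PS n := by
  have := red (n := n) 4 (fun x => bit (lf S' ε' x) * bit (lf S'' ε'' x))
    (mem_of_eq (by funext x; beta_reduce; ring) (L4_2 S' ε' S'' ε''))
    (fun a => mem_of_eq (by funext x; beta_reduce; ring) (L4_v2 a S' ε' S'' ε''))
    (fun a T τ => cross_trivial_4 (fun x => bit (lf S' ε' x) * bit (lf S'' ε'' x)) a T τ) S ε
  exact mem_of_eq (by funext x; beta_reduce; ring) this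

lemma L2_1 (S : Finset (Fin n)) (ε : ZMod 2) : (fun x : V n => 2 * bit (lf S ε x)) ∈ PS n := by
  have := red (n := n) 2 (fun _ => 1)
    (mem_of_eq (by funext x; beta_reduce; ring) (mem_const 2))
    (fun a => mem_of_eq (by funext x; beta_reduce; ring) (mem_2m a))
    (fun a S' ε' => mem_of_eq (by funext x; beta_reduce; ring) (L4_v1 a S' ε')) S ε
  exact mem_of_eq (by funext x; beta_reduce; ring) this

lemma L2_v1 (a : Fin n) (S : Finset (Fin n)) (ε : ZMod 2) :
    (fun x : V n => 2 * bit (x a) * bit (lf S ε x)) ∈ PS n := by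
  have := red (n := n) 2 (fun x => bit (x a))
    (mem_of_eq (by funext x; beta_reduce; ring) (mem_2m a))
    (fun b => mem_of_eq (by funext x; beta_reduce; ring) (mem_2mm b a))
    (fun b S' ε' => mem_of_eq (by funext x; beta_reduce; ring) (L4_vv b a S' ε')) S ε
  exact mem_of_eq (by funext x; beta_reduce; ring) this

lemma L2_2 (S : Finset (Fin n)) (ε : ZMod 2) (S' : Finset (Fin n)) (ε' : ZMod 2) :
    (fun x : V n => 2 * bit (lf S ε x) * bit (lf S' ε' x)) ∈ PS n := by
  have := red (n := n) 2 (fun x => bit (lf S' ε' x))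
    (mem_of_eq (by funext x; beta_reduce; ring) (L2_1 S' ε'))
    (fun a => mem_of_eq (by funext x; beta_reduce; ring) (L2_v1 a S' ε'))
    (fun a S'' ε'' => mem_of_eq (by funext x; beta_reduce; ring)
      (L4_v2 a S'' ε'' S' ε')) S ε
  exact mem_of_eq (by funext x; beta_reduce; ring) this

lemma L1 (S : Finset (Fin n)) (ε : ZMod 2) : (fun x : V n => bit (lf S ε x)) ∈ PS n := by
  have := red (n := n) 1 (fun _ => 1)
    (mem_of_eq (by funext x; beta_reduce; ring) (mem_const 1))
    (fun a => mem_of_eq (by funext x; beta_reduce; ring) (mem_m a))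
    (fun a S' ε' => mem_of_eq (by funext x; beta_reduce; ring) (L2_v1 a S' ε')) S ε
  exact mem_of_eq (by funext x; beta_reduce; ring) this

lemma mem_smul (a : ZMod 8) {g : V n → ZMod 8} (hg : g ∈ PS n) :
    (fun x => a * g x) ∈ PS n := by
  refine mem_of_eq ?_ (AddSubgroup.nsmul_mem _ hg a.val)
  funext x
  rw [Pi.smul_apply, nsmul_eq_mul, ZMod.natCast_val, ZMod.cast_id]

/-- The affine group of permutations of `V n`. -/
def Aff (n : ℕ) : Subgroup (Equiv.Perm (V n)) where
  carrier := {σ | ∃ (M : V n ≃ₗ[ZMod 2] V n) (v : V n), ∀ x, σ x = M x + v}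
  one_mem' := ⟨LinearEquiv.refl _ _, 0, by simp⟩
  mul_mem' := by
    rintro σ τ ⟨M, v, hM⟩ ⟨N, w, hN⟩
    refine ⟨N ≪≫ₗ M, M w + v, fun x => ?_⟩
    simp only [Equiv.Perm.mul_apply, hM, hN, LinearEquiv.trans_apply, map_add]
    abel
  inv_mem' := by
    rintro σ ⟨M, v, hM⟩
    refine ⟨M.symm, M.symm (-v), fun x => ?_⟩
    have h : σ (M.symm x + M.symm (-v)) = x := by
      rw [hM, map_add, LinearEquiv.apply_symm_apply, LinearEquiv.apply_symm_apply]
      abel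
    apply σ.injective
    rw [show σ (σ⁻¹ x) = x from σ.apply_symm_apply x]
    exact h.symm

lemma linear_coord (M : V n ≃ₗ[ZMod 2] V n) (i : Fin n) (x : V n) :
    M x i = ∑ j ∈ Finset.univ.filter (fun j => (M (Pi.single j 1)) i = 1), x j := by
  have hx : x = ∑ j, x j • Pi.single j (1 : ZMod 2) := by
    funext k
    rw [Finset.sum_apply]
    simp [Pi.single_apply, Finset.sum_ite_eq']
  conv_lhs => rw [hx]
  rw [map_sum]
  rw [Finset.sum_apply]
  rw [Finset.sum_filter]
  refine Finset.sum_congr rfl fun j _ => ?_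
  rw [map_smul]
  rcases zmod2_cases ((M (Pi.single j 1)) i) with h | h <;>
    simp [Pi.smul_apply, smul_eq_mul, h]

lemma comp_mem {f : V n → ZMod 8} (hf : f ∈ PS n) {σ : Equiv.Perm (V n)}
    (hσ : σ ∈ Aff n) : (fun x => f (σ x)) ∈ PS n := by
  obtain ⟨a₀, a, b, c, rfl⟩ := hf
  obtain ⟨M, v, hM⟩ := hσ
  set S : Fin n → Finset (Fin n) :=
    fun i => Finset.univ.filter (fun j => (M (Pi.single j 1)) i = 1) with hS
  have hcoord : ∀ (x : V n) (i : Fin n), σ x i = lf (S i) (v i) x := by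
    intro x i
    rw [hM, Pi.add_apply, lf, ← linear_coord]
  have hsplit : (fun x => Phi a₀ a b c (σ x)) =
      (fun _ : V n => a₀)
      + (∑ i : Fin n, fun x : V n => a i * bit (lf (S i) (v i) x))
      + (∑ p : Pair n, fun x : V n => ((b p).val : ZMod 8) *
          (2 * bit (lf (S p.val.1) (v p.val.1) x) * bit (lf (S p.val.2) (v p.val.2) x)))
      + (∑ t : Triple n, fun x : V n => ((c t).val : ZMod 8) *
          (4 * bit (lf (S t.val.1) (v t.val.1) x) * bit (lf (S t.val.2.1) (v t.val.2.1) x)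
            * bit (lf (S t.val.2.2) (v t.val.2.2) x))) := by
    funext x
    simp only [Phi, Pi.add_apply, Finset.sum_apply, hcoord]
    refine congrArg₂ (· + ·) (congrArg₂ (· + ·) rfl ?_) ?_
    · exact Finset.sum_congr rfl fun p _ => by ring
    · exact Finset.sum_congr rfl fun t _ => by ring
  rw [hsplit]
  refine AddSubgroup.add_mem _ (AddSubgroup.add_mem _ (AddSubgroup.add_mem _
    (mem_const a₀) ?_) ?_) ?_
  · exact AddSubgroup.sum_mem _ fun i _ => mem_smul (a i) (L1 (S i) (v i))
  · refine AddSubgroup.sum_mem _ fun p _ => mem_smul _ ?_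
    exact mem_of_eq (by funext x; ring) (L2_2 (S p.val.1) (v p.val.1) (S p.val.2) (v p.val.2))
  · refine AddSubgroup.sum_mem _ fun t _ => mem_smul _ ?_
    exact mem_of_eq (by funext x; ring)
      (L4_3 (S t.val.1) (v t.val.1) (S t.val.2.1) (v t.val.2.1) (S t.val.2.2) (v t.val.2.2))



variable {n : ℕ}

lemma bit_val (u : ZMod 2) : (bit u).val = u.val := by revert u; decide

lemma zeta_bit (u : ZMod 2) : zeta (bit u) = ω ^ u.val := by rw [zeta, bit_val]

/-- the CNOT linear map with control `i` and target `j` -/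
def cnotLin (i j : Fin n) : V n →ₗ[ZMod 2] V n :=
  LinearMap.id + LinearMap.smulRight (LinearMap.proj i) (Pi.single j 1)

lemma cnotLin_apply (i j : Fin n) (x : V n) :
    cnotLin i j x = x + x i • (Pi.single j 1 : V n) := rfl

lemma cnotLin_invol {i j : Fin n} (h : i ≠ j) :
    (cnotLin i j).comp (cnotLin i j) = LinearMap.id := by
  apply LinearMap.ext; intro x
  simp only [LinearMap.comp_apply, cnotLin_apply, LinearMap.id_apply]
  have hs : (x + x i • (Pi.single j 1 : V n)) i = x i := by
    simp [Pi.single_apply, h.symm]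
  rw [hs, add_assoc, ← add_smul, CharTwo.add_self_eq_zero (x i), zero_smul, add_zero]

def cnotEquiv (i j : Fin n) (h : i ≠ j) : V n ≃ₗ[ZMod 2] V n :=
  LinearEquiv.ofLinear (cnotLin i j) (cnotLin i j) (cnotLin_invol h) (cnotLin_invol h)

def cnotPerm (i j : Fin n) (h : i ≠ j) : Equiv.Perm (V n) := (cnotEquiv i j h).toEquiv

lemma cnotPerm_apply (i j : Fin n) (h : i ≠ j) (x : V n) :
    cnotPerm i j h x = Function.update x j (x i + x j) := by
  funext k
  show (x + x i • (Pi.single j 1 : V n)) k = _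
  rcases eq_or_ne k j with rfl | hk
  · simp [Function.update_apply, Pi.single_apply, add_comm]
  · simp [Function.update_apply, Pi.single_apply, hk, Ne.symm hk]

lemma cnotPerm_mem_Aff (i j : Fin n) (h : i ≠ j) : cnotPerm i j h ∈ Aff n :=
  ⟨cnotEquiv i j h, 0, fun x => by simp [cnotPerm]⟩

lemma addRight_mem_Aff (v : V n) : Equiv.addRight v ∈ Aff n :=
  ⟨LinearEquiv.refl _ _, v, fun x => rfl⟩

lemma update_eq_add_single (x : V n) (i : Fin n) :
    Function.update x i (x i + 1) = x + Pi.single i 1 := by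
  funext k
  rcases eq_or_ne k i with rfl | hk
  · simp [Function.update_apply]
  · simp [Function.update_apply, hk, Pi.single_apply]

/-- the four families of canonical generators -/
lemma gen_scalar_mem : Dop (fun _ : V n => (1 : ZMod 8)) ∈ dihedralGroup' n := by
  apply Subgroup.subset_closure
  left; left; left
  intro x
  rw [Dop_apply_e]
  congr 1
  rw [zeta, show ((1 : ZMod 8)).val = 1 from rfl, pow_one]

lemma gen_T_mem (i : Fin n) : Dop (fun x : V n => bit (x i)) ∈ dihedralGroup' n := by
  apply Subgroup.subset_closure
  left; left; right
  exact ⟨i, fun x => by rw [Dop_apply_e, zeta_bit]⟩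

lemma gen_X_mem (i : Fin n) :
    Pop (Equiv.addRight (Pi.single i (1 : ZMod 2))) ∈ dihedralGroup' n := by
  apply Subgroup.subset_closure
  left; right
  refine ⟨i, fun x => ?_⟩
  rw [Pop_apply_e, update_eq_add_single]
  rfl

lemma gen_CX_mem (i j : Fin n) (h : i ≠ j) :
    Pop (cnotPerm i j h) ∈ dihedralGroup' n := by
  apply Subgroup.subset_closure
  right
  exact ⟨i, j, h, fun x => by rw [Pop_apply_e, cnotPerm_apply]⟩

/-- translations are in the closure -/
lemma Pop_addRight_mem (v : V n) : Pop (Equiv.addRight v) ∈ dihedralGroup' n := by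
  have key : ∀ s : Finset (Fin n),
      Pop (Equiv.addRight (∑ i ∈ s, Pi.single i (v i))) ∈ dihedralGroup' n := by
    intro s
    induction s using Finset.induction_on with
    | empty =>
      rw [show Equiv.addRight (∑ i ∈ (∅ : Finset (Fin n)), Pi.single i (v i))
          = (1 : Equiv.Perm (V n)) by
        apply Equiv.ext; intro x; simp]
      rw [Pop_one]
      exact Subgroup.one_mem _
    | @insert a s ha ih =>
      rw [Finset.sum_insert ha]
      rw [show Equiv.addRight (Pi.single a (v a) + ∑ i ∈ s, Pi.single i (v i))
          = Equiv.addRight (∑ i ∈ s, Pi.single i (v i)) * Equiv.addRight (Pi.single a (v a)) by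
        apply Equiv.ext; intro x
        simp [Equiv.coe_addRight, Equiv.Perm.mul_apply, add_assoc]]
      rw [← Pop_mul]
      refine Subgroup.mul_mem _ ih ?_
      rcases zmod2_cases (v a) with h | h <;> rw [h]
      · rw [show Equiv.addRight (Pi.single a (0 : ZMod 2)) = (1 : Equiv.Perm (V n)) by
          apply Equiv.ext; intro x; simp]
        rw [Pop_one]
        exact Subgroup.one_mem _
      · exact gen_X_mem a
  have hv : v = ∑ i, Pi.single i (v i) := by
    funext k
    rw [Finset.sum_apply]
    simp [Pi.single_apply, Finset.sum_ite_eq']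
  have := key Finset.univ
  rwa [← hv] at this

/-- transvection structure to permutation -/
def tPerm (t : Matrix.TransvectionStruct (Fin n) (ZMod 2)) : Equiv.Perm (V n) :=
  if hc : t.c = 1 then cnotPerm t.j t.i (Ne.symm t.hij) else 1

lemma tPerm_mulVec (t : Matrix.TransvectionStruct (Fin n) (ZMod 2)) (x : V n) :
    (t.toMatrix).mulVec x = tPerm t x := by
  rw [show t.toMatrix = Matrix.transvection t.i t.j t.c by
      cases t; rfl]
  rw [Matrix.transvection, Matrix.add_mulVec, Matrix.one_mulVec, Matrix.single_mulVec]
  rcases zmod2_cases t.c with h | h <;> rw [tPerm] <;> rw [h]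
  · rw [dif_neg (by decide)]
    funext k
    simp [Function.update_apply, Equiv.Perm.one_apply]
  · rw [dif_pos rfl]
    rw [cnotPerm_apply]
    funext k
    rcases eq_or_ne k t.i with rfl | hk
    · simp [Function.update_apply, add_comm]
    · simp [Function.update_apply, hk]

lemma tPerm_mem (t : Matrix.TransvectionStruct (Fin n) (ZMod 2)) :
    Pop (tPerm t) ∈ dihedralGroup' n := by
  rw [tPerm]
  split
  · exact gen_CX_mem _ _ _
  · rw [Pop_one]; exact Subgroup.one_mem _

lemma list_mulVec (L : List (Matrix.TransvectionStruct (Fin n) (ZMod 2))) (x : V n) :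
    ((L.map Matrix.TransvectionStruct.toMatrix).prod).mulVec x = ((L.map tPerm).prod) x := by
  induction L generalizing x with
  | nil => simp [Matrix.one_mulVec]
  | cons t L ih =>
    simp only [List.map_cons, List.prod_cons]
    rw [← Matrix.mulVec_mulVec, ih, Equiv.Perm.mul_apply, tPerm_mulVec]

set_option maxHeartbeats 2000000 in
lemma Pop_linear_mem (M : V n ≃ₗ[ZMod 2] V n) : Pop M.toEquiv ∈ dihedralGroup' n := by
  classical
  set A := LinearMap.toMatrix' (M : V n →ₗ[ZMod 2] V n) with hAdef
  obtain ⟨L, L', D, hA⟩ := Matrix.Pivot.exists_list_transvec_mul_diagonal_mul_list_transvec A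
  have hdetA : IsUnit A.det := by
    apply Matrix.isUnit_det_of_left_inverse (B := LinearMap.toMatrix' (M.symm : V n →ₗ[ZMod 2] V n))
    rw [← LinearMap.toMatrix'_comp]
    rw [show ((M.symm : V n →ₗ[ZMod 2] V n).comp (M : V n →ₗ[ZMod 2] V n)) = LinearMap.id by
      apply LinearMap.ext; intro x; simp]
    exact LinearMap.toMatrix'_id
  have hD : D = fun _ => 1 := by
    funext i
    have hdet : IsUnit (Matrix.diagonal D).det := by
      rw [hA] at hdetA
      rw [Matrix.det_mul, Matrix.det_mul] at hdetA
      exact isUnit_of_mul_isUnit_right (isUnit_of_mul_isUnit_left hdetA)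
    rw [Matrix.det_diagonal] at hdet
    have hne : D i ≠ 0 := by
      intro h0
      rw [Finset.prod_eq_zero (Finset.mem_univ i) h0] at hdet
      exact (not_isUnit_zero : ¬ IsUnit (0 : ZMod 2)) hdet
    rcases zmod2_cases (D i) with h | h
    · exact absurd h hne
    · exact h
  rw [hD, Matrix.diagonal_one, Matrix.mul_one] at hA
  have hperm : M.toEquiv = ((L ++ L').map tPerm).prod := by
    apply Equiv.ext; intro x
    have h1 : M x = A.mulVec x := by
      rw [hAdef, ← Matrix.toLin'_apply, Matrix.toLin'_toMatrix']
      rfl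
    rw [show M.toEquiv x = M x from rfl, h1, hA, ← List.prod_append, ← List.map_append,
      list_mulVec]
  rw [hperm]
  have : Pop (((L ++ L').map tPerm).prod)
      = (((L ++ L').map tPerm).map Pop).prod := by
    induction (L ++ L').map tPerm with
    | nil => simp [Pop_one]
    | cons p ps ih => simp only [List.prod_cons, List.map_cons, ← ih, Pop_mul]
  rw [this]
  apply Subgroup.list_prod_mem
  intro g hg
  simp only [List.mem_map] at hg
  obtain ⟨p, hp, rfl⟩ := hg
  obtain ⟨t, _, rfl⟩ := hp
  exact tPerm_mem t

lemma Pop_aff_mem {σ : Equiv.Perm (V n)} (hσ : σ ∈ Aff n) : Pop σ ∈ dihedralGroup' n := by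
  obtain ⟨M, v, hM⟩ := hσ
  have hdecomp : σ = Equiv.addRight v * M.toEquiv := by
    apply Equiv.ext; intro x
    rw [hM]
    rfl
  rw [hdecomp, ← Pop_mul]
  exact Subgroup.mul_mem _ (Pop_addRight_mem v) (Pop_linear_mem M)


lemma mem_of_eq' (Q : AddSubgroup (V n → ZMod 8)) {f g : V n → ZMod 8} (h : f = g)
    (hg : g ∈ Q) : f ∈ Q := h ▸ hg

lemma mem_smul' (Q : AddSubgroup (V n → ZMod 8)) (a : ZMod 8) {g : V n → ZMod 8}
    (hg : g ∈ Q) : (fun x => a * g x) ∈ Q := by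
  refine mem_of_eq' Q ?_ (AddSubgroup.nsmul_mem _ hg a.val)
  funext x
  rw [Pi.smul_apply, nsmul_eq_mul, ZMod.natCast_val, ZMod.cast_id]

/-- generic: `Phi` lies in any subgroup containing the generating monomials -/
lemma Phi_mem_of (Q : AddSubgroup (V n → ZMod 8))
    (h0 : (fun _ : V n => (1 : ZMod 8)) ∈ Q)
    (h1 : ∀ i, (fun x : V n => bit (x i)) ∈ Q)
    (h2 : ∀ i j : Fin n, i ≠ j → (fun x : V n => 2 * (bit (x i) * bit (x j))) ∈ Q)
    (h3 : ∀ i j k : Fin n, i ≠ j → i ≠ k → j ≠ k →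
      (fun x : V n => 4 * (bit (x i) * bit (x j) * bit (x k))) ∈ Q)
    (a₀ : ZMod 8) (a : Fin n → ZMod 8) (b : Pair n → ZMod 4) (c : Triple n → ZMod 2) :
    Phi a₀ a b c ∈ Q := by
  have hsplit : Phi a₀ a b c =
      (fun _ : V n => a₀)
      + (∑ i : Fin n, fun x : V n => a i * bit (x i))
      + (∑ p : Pair n, fun x : V n => ((b p).val : ZMod 8) *
          (2 * (bit (x p.val.1) * bit (x p.val.2))))
      + (∑ t : Triple n, fun x : V n => ((c t).val : ZMod 8) *
          (4 * (bit (x t.val.1) * bit (x t.val.2.1) * bit (x t.val.2.2)))) := by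
    funext x
    simp only [Phi, Pi.add_apply, Finset.sum_apply]
    refine congrArg₂ (· + ·) (congrArg₂ (· + ·) rfl ?_) ?_
    · exact Finset.sum_congr rfl fun p _ => by ring
    · exact Finset.sum_congr rfl fun t _ => by ring
  rw [hsplit]
  refine AddSubgroup.add_mem _ (AddSubgroup.add_mem _ (AddSubgroup.add_mem _ ?_ ?_) ?_) ?_
  · exact mem_of_eq' Q (by funext x; rw [mul_one]) (mem_smul' Q a₀ h0)
  · exact AddSubgroup.sum_mem _ fun i _ => mem_smul' Q (a i) (h1 i)
  · refine AddSubgroup.sum_mem _ fun p _ => mem_smul' Q _ ?_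
    exact h2 _ _ (ne_of_lt p.prop)
  · refine AddSubgroup.sum_mem _ fun t _ => mem_smul' Q _ ?_
    exact h3 _ _ _ (ne_of_lt t.prop.1) (ne_of_lt (t.prop.1.trans t.prop.2)) (ne_of_lt t.prop.2)

/-- the subgroup of phase functions whose diagonal operator lies in the closure -/
def KS (n : ℕ) : AddSubgroup (V n → ZMod 8) where
  carrier := {f | Dop f ∈ dihedralGroup' n}
  zero_mem' := by
    show Dop 0 ∈ dihedralGroup' n
    rw [Dop_zero]; exact Subgroup.one_mem _
  add_mem' := by
    intro f g hf hg
    show Dop (f + g) ∈ dihedralGroup' n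
    rw [← Dop_mul]
    exact Subgroup.mul_mem _ hf hg
  neg_mem' := by
    intro f hf
    show Dop (-f) ∈ dihedralGroup' n
    have h : Dop (-f) = (Dop f)⁻¹ := by
      apply eq_inv_of_mul_eq_one_left
      rw [Dop_mul, neg_add_cancel, Dop_zero]
    rw [h]
    exact Subgroup.inv_mem _ hf

lemma KS_comp {f : V n → ZMod 8} (hf : f ∈ KS n) {σ : Equiv.Perm (V n)} (hσ : σ ∈ Aff n) :
    (fun x => f (σ x)) ∈ KS n := by
  have hpop := Pop_aff_mem hσ
  show Dop (fun x => f (σ x)) ∈ dihedralGroup' n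
  have key : Pop σ * Dop (fun x => f (σ x)) = Dop f * Pop σ := by
    rw [Pop_Dop]
    congr 1
    apply Units.ext
    apply LinearMap.ext; intro v; funext y
    simp [Equiv.apply_symm_apply]
  have h2 : Dop (fun x => f (σ x)) = (Pop σ)⁻¹ * (Dop f * Pop σ) := by
    rw [← key, ← mul_assoc, inv_mul_cancel, one_mul]
  rw [h2]
  exact Subgroup.mul_mem _ (Subgroup.inv_mem _ hpop)
    (Subgroup.mul_mem _ (show Dop f ∈ dihedralGroup' n from hf) hpop)

lemma bit2_identity (u v : ZMod 2) :
    2 * (bit u * bit v) = bit u + bit v - bit (u + v) := by revert u v; decide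

lemma bit3_identity (u v w : ZMod 2) :
    4 * (bit u * bit v * bit w) = bit (u + v + w) - bit u - bit v - bit w
      + 2 * (bit u * bit v) + 2 * (bit u * bit w) + 2 * (bit v * bit w) := by
  revert u v w; decide

lemma KS_const : (fun _ : V n => (1 : ZMod 8)) ∈ KS n := gen_scalar_mem

lemma KS_m (i : Fin n) : (fun x : V n => bit (x i)) ∈ KS n := gen_T_mem i

lemma KS_sum2 (i j : Fin n) (hij : i ≠ j) : (fun x : V n => bit (x i + x j)) ∈ KS n := by
  have h := KS_comp (KS_m j) (cnotPerm_mem_Aff i j hij)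
  refine mem_of_eq' _ ?_ h
  funext x
  rw [cnotPerm_apply, Function.update_self]

lemma KS_2mm (i j : Fin n) (hij : i ≠ j) :
    (fun x : V n => 2 * (bit (x i) * bit (x j))) ∈ KS n := by
  refine mem_of_eq' _ (funext fun x => bit2_identity (x i) (x j)) ?_
  exact mem_of_eq' _ rfl (AddSubgroup.sub_mem _
    (AddSubgroup.add_mem _ (KS_m i) (KS_m j)) (KS_sum2 i j hij))

lemma KS_sum3 (i j k : Fin n) (hik : i ≠ k) (hjk : j ≠ k) :
    (fun x : V n => bit (x i + x j + x k)) ∈ KS n := by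
  have hτ : (cnotPerm i k hik) * (cnotPerm j k hjk) ∈ Aff n :=
    Subgroup.mul_mem _ (cnotPerm_mem_Aff i k hik) (cnotPerm_mem_Aff j k hjk)
  have h := KS_comp (KS_m k) hτ
  refine mem_of_eq' _ ?_ h
  funext x
  rw [Equiv.Perm.mul_apply, cnotPerm_apply, cnotPerm_apply]
  rw [Function.update_self]
  rw [Function.update_apply]
  rw [if_neg hik, Function.update_self]
  ring

lemma KS_4mmm (i j k : Fin n) (hij : i ≠ j) (hik : i ≠ k) (hjk : j ≠ k) :
    (fun x : V n => 4 * (bit (x i) * bit (x j) * bit (x k))) ∈ KS n := by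
  refine mem_of_eq' _ (funext fun x => bit3_identity (x i) (x j) (x k)) ?_
  refine AddSubgroup.add_mem _ (AddSubgroup.add_mem _ (AddSubgroup.add_mem _
    (AddSubgroup.sub_mem _ (AddSubgroup.sub_mem _ (AddSubgroup.sub_mem _
      (KS_sum3 i j k hik hjk) (KS_m i)) (KS_m j)) (KS_m k))
    (KS_2mm i j hij)) (KS_2mm i k hik)) (KS_2mm j k hjk)

lemma Dop_PS_mem {f : V n → ZMod 8} (hf : f ∈ PS n) : Dop f ∈ dihedralGroup' n := by
  obtain ⟨a₀, a, b, c, rfl⟩ := hf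
  exact Phi_mem_of (KS n) KS_const KS_m KS_2mm KS_4mmm a₀ a b c

/-- the candidate subgroup -/
def H (n : ℕ) : Subgroup (LinearMap.GeneralLinearGroup ℂ (QState n)) where
  carrier := {W | ∃ f ∈ PS n, ∃ σ ∈ Aff n, W = Dop f * Pop σ}
  one_mem' := ⟨0, AddSubgroup.zero_mem _, 1, Subgroup.one_mem _, by
    rw [Dop_zero, Pop_one, one_mul]⟩
  mul_mem' := by
    rintro W W' ⟨f, hf, σ, hσ, rfl⟩ ⟨g, hg, τ, hτ, rfl⟩
    refine ⟨f + fun x => g (σ⁻¹ x), AddSubgroup.add_mem _ hf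
      (comp_mem hg (Subgroup.inv_mem _ hσ)), σ * τ, Subgroup.mul_mem _ hσ hτ, ?_⟩
    rw [← Dop_mul, ← Pop_mul]
    have hmid : Pop σ * Dop g = Dop (fun x => g (σ⁻¹ x)) * Pop σ := Pop_Dop σ g
    calc Dop f * Pop σ * (Dop g * Pop τ)
        = Dop f * (Pop σ * Dop g) * Pop τ := by group
      _ = Dop f * (Dop (fun x => g (σ⁻¹ x)) * Pop σ) * Pop τ := by rw [hmid]
      _ = Dop f * Dop (fun x => g (σ⁻¹ x)) * (Pop σ * Pop τ) := by group
  inv_mem' := by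
    rintro W ⟨f, hf, σ, hσ, rfl⟩
    refine ⟨fun x => -f (σ x), mem_of_eq' _ (by funext x; simp) (AddSubgroup.neg_mem _
      (comp_mem hf hσ)), σ⁻¹, Subgroup.inv_mem _ hσ, ?_⟩
    rw [mul_inv_rev]
    have h1 : (Dop f)⁻¹ = Dop (-f) := by
      symm
      apply eq_inv_of_mul_eq_one_left
      rw [Dop_mul, neg_add_cancel, Dop_zero]
    rw [h1, Pop_inv]
    have h2 : Pop σ⁻¹ * Dop (-f) = Dop (fun x => -f (σ x)) * Pop σ⁻¹ := by
      rw [Pop_Dop]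
      congr 1
    rw [h2]

lemma GL_ext {W W' : LinearMap.GeneralLinearGroup ℂ (QState n)}
    (h : ∀ x, W.val (e x) = W'.val (e x)) : W = W' := by
  apply Units.ext
  apply (Pi.basisFun ℂ (V n)).ext
  intro x
  have hb : (Pi.basisFun ℂ (V n)) x = e x := by
    simp [e]
  rw [hb]
  exact h x

lemma zeta_one_eq : zeta (1 : ZMod 8) = ω := by
  rw [zeta, show ((1 : ZMod 8)).val = 1 from rfl, pow_one]

lemma gens_le_H : dihedralGens n ⊆ (H n : Set (LinearMap.GeneralLinearGroup ℂ (QState n))) := by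
  rintro W (((hW | hW) | hW) | hW)
  · refine ⟨(fun _ => 1), mem_const 1, 1, Subgroup.one_mem _, ?_⟩
    rw [Pop_one, mul_one]
    apply GL_ext
    intro x
    rw [hW x, Dop_apply_e, zeta_one_eq]
  · obtain ⟨i, hW⟩ := hW
    refine ⟨(fun x => bit (x i)), mem_m i, 1, Subgroup.one_mem _, ?_⟩
    rw [Pop_one, mul_one]
    apply GL_ext
    intro x
    rw [hW x, Dop_apply_e, zeta_bit]
  · obtain ⟨i, hW⟩ := hW
    refine ⟨0, AddSubgroup.zero_mem _, Equiv.addRight (Pi.single i 1),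
      addRight_mem_Aff _, ?_⟩
    rw [Dop_zero, one_mul]
    apply GL_ext
    intro x
    rw [hW x, Pop_apply_e, update_eq_add_single]
    rfl
  · obtain ⟨i, j, hij, hW⟩ := hW
    refine ⟨0, AddSubgroup.zero_mem _, cnotPerm i j hij, cnotPerm_mem_Aff i j hij, ?_⟩
    rw [Dop_zero, one_mul]
    apply GL_ext
    intro x
    rw [hW x, Pop_apply_e, cnotPerm_apply]

lemma closure_eq_H : dihedralGroup' n = H n := by
  apply le_antisymm
  · exact (Subgroup.closure_le _).2 gens_le_H
  · rintro W ⟨f, hf, σ, hσ, rfl⟩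
    exact Subgroup.mul_mem _ (Dop_PS_mem hf) (Pop_aff_mem hσ)

lemma e_apply_self (x : V n) : e x x = 1 := by simp [e]

lemma e_apply_ne {x y : V n} (h : y ≠ x) : e x y = 0 := by simp [e, Pi.single_apply, h]

lemma DP_apply_e (f : V n → ZMod 8) (σ : Equiv.Perm (V n)) (x : V n) :
    (Dop f * Pop σ).val (e x) = zeta (f (σ x)) • e (σ x) := by
  have : (Dop f * Pop σ).val (e x) = (Dop f).val ((Pop σ).val (e x)) := rfl
  rw [this, Pop_apply_e, Dop_apply_e]

lemma DP_inj {f g : V n → ZMod 8} {σ τ : Equiv.Perm (V n)}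
    (h : Dop f * Pop σ = Dop g * Pop τ) : f = g ∧ σ = τ := by
  have hx : ∀ x, zeta (f (σ x)) • e (σ x) = zeta (g (τ x)) • e (τ x) := by
    intro x
    rw [← DP_apply_e, ← DP_apply_e, h]
  have hστ : σ = τ := by
    apply Equiv.ext
    intro x
    have h1 := congrFun (hx x) (σ x)
    simp only [Pi.smul_apply, e_apply_self, smul_eq_mul, mul_one] at h1
    by_contra hne
    rw [e_apply_ne (fun hc : σ x = τ x => hne hc), mul_zero] at h1
    exact zeta_ne_zero _ h1
  subst hστ
  refine ⟨?_, rfl⟩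
  funext y
  have h1 := congrFun (hx (σ.symm y)) (σ (σ.symm y))
  simp only [Pi.smul_apply, e_apply_self, smul_eq_mul, mul_one] at h1
  have := zeta_inj h1
  rwa [Equiv.apply_symm_apply] at this

/-! ### Counting -/

def ind (s : Finset (Fin n)) : V n := fun l => if l ∈ s then 1 else 0

lemma bit_ind (s : Finset (Fin n)) (l : Fin n) :
    bit (ind s l) = if l ∈ s then 1 else 0 := by
  rw [ind]; split <;> simp [bit_one, bit_zero]

lemma Phi_ind (a₀ : ZMod 8) (a : Fin n → ZMod 8) (b : Pair n → ZMod 4) (c : Triple n → ZMod 2)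
    (s : Finset (Fin n)) :
    Phi a₀ a b c (ind s) = a₀ + (∑ i ∈ s, a i)
      + (∑ p ∈ Finset.univ.filter (fun p : Pair n => p.val.1 ∈ s ∧ p.val.2 ∈ s),
          ((b p).val : ZMod 8) * 2)
      + (∑ t ∈ Finset.univ.filter
            (fun t : Triple n => t.val.1 ∈ s ∧ t.val.2.1 ∈ s ∧ t.val.2.2 ∈ s),
          ((c t).val : ZMod 8) * 4) := by
  rw [Phi]
  congr 1
  · congr 1
    · congr 1
      have h1 : ∀ i, a i * bit (ind s i) = if i ∈ s then a i else 0 := fun i => by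
        rw [bit_ind]; split <;> simp
      rw [Finset.sum_congr rfl fun i _ => h1 i, Finset.sum_ite_mem, Finset.univ_inter]
    · have h2 : ∀ p : Pair n, ((b p).val : ZMod 8) * 2 * (bit (ind s p.val.1) * bit (ind s p.val.2))
          = if p.val.1 ∈ s ∧ p.val.2 ∈ s then ((b p).val : ZMod 8) * 2 else 0 := fun p => by
        rw [bit_ind, bit_ind]
        split_ifs with h1 h2 h3 <;> simp_all
      rw [Finset.sum_congr rfl fun p _ => h2 p, ← Finset.sum_filter]
  · have h3 : ∀ t : Triple n, ((c t).val : ZMod 8) * 4 *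
          (bit (ind s t.val.1) * bit (ind s t.val.2.1) * bit (ind s t.val.2.2))
        = if t.val.1 ∈ s ∧ t.val.2.1 ∈ s ∧ t.val.2.2 ∈ s
          then ((c t).val : ZMod 8) * 4 else 0 := fun t => by
      rw [bit_ind, bit_ind, bit_ind]
      split_ifs with h1 h2 h3 h4 <;> simp_all
    rw [Finset.sum_congr rfl fun t _ => h3 t, ← Finset.sum_filter]

lemma bval_inj {u v : ZMod 4} (h : ((u.val : ZMod 8)) * 2 = ((v.val : ZMod 8)) * 2) : u = v := by
  revert u v; decide

lemma cval_inj {u v : ZMod 2} (h : ((u.val : ZMod 8)) * 4 = ((v.val : ZMod 8)) * 4) : u = v := by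
  revert u v; decide

lemma sorted2 {i j c1 c2 : Fin n} (hij : i < j) (h1 : c1 = i ∨ c1 = j)
    (h2 : c2 = i ∨ c2 = j) (hc : c1 < c2) : c1 = i ∧ c2 = j := by
  rcases h1 with rfl | rfl <;> rcases h2 with rfl | rfl <;>
    first
      | exact ⟨rfl, rfl⟩
      | exact absurd hc (lt_irrefl _)
      | exact absurd (hc.trans hij) (lt_irrefl _)
      | exact absurd (hij.trans hc) (lt_irrefl _)

lemma sorted3 {i j k c1 c2 c3 : Fin n} (hij : i < j) (hjk : j < k)
    (h1 : c1 = i ∨ c1 = j ∨ c1 = k) (h2 : c2 = i ∨ c2 = j ∨ c2 = k)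
    (h3 : c3 = i ∨ c3 = j ∨ c3 = k) (hc12 : c1 < c2) (hc23 : c2 < c3) :
    c1 = i ∧ c2 = j ∧ c3 = k := by
  rcases h1 with rfl | rfl | rfl <;> rcases h2 with rfl | rfl | rfl <;>
    rcases h3 with rfl | rfl | rfl <;>
    first
      | exact ⟨rfl, rfl, rfl⟩
      | (exfalso; simp only [Fin.lt_def] at *; omega)

lemma pair_filter_singleton {i j : Fin n} (hij : i < j) :
    Finset.univ.filter (fun p : Pair n => p.val.1 ∈ ({i, j} : Finset (Fin n))
      ∧ p.val.2 ∈ ({i, j} : Finset (Fin n))) = {(⟨(i, j), hij⟩ : Pair n)} := by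
  ext q
  simp only [Finset.mem_filter, Finset.mem_univ, true_and, Finset.mem_singleton,
    Finset.mem_insert, Finset.mem_singleton]
  constructor
  · rintro ⟨h1, h2⟩
    obtain ⟨hq1, hq2⟩ := sorted2 hij h1 h2 q.prop
    apply Subtype.ext
    exact Prod.ext hq1 hq2
  · rintro rfl
    exact ⟨Or.inl rfl, Or.inr rfl⟩

lemma triple_filter_singleton {i j k : Fin n} (hij : i < j) (hjk : j < k) :
    Finset.univ.filter (fun t : Triple n => t.val.1 ∈ ({i, j, k} : Finset (Fin n))
      ∧ t.val.2.1 ∈ ({i, j, k} : Finset (Fin n)) ∧ t.val.2.2 ∈ ({i, j, k} : Finset (Fin n)))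
      = {(⟨(i, j, k), hij, hjk⟩ : Triple n)} := by
  ext q
  simp only [Finset.mem_filter, Finset.mem_univ, true_and, Finset.mem_singleton,
    Finset.mem_insert, Finset.mem_singleton]
  constructor
  · rintro ⟨h1, h2, h3⟩
    obtain ⟨hq1, hq2, hq3⟩ := sorted3 hij hjk h1 h2 h3 q.prop.1 q.prop.2
    apply Subtype.ext
    exact Prod.ext hq1 (Prod.ext hq2 hq3)
  · rintro rfl
    exact ⟨Or.inl rfl, Or.inr (Or.inl rfl), Or.inr (Or.inr rfl)⟩

lemma pair_filter_sub_empty {s : Finset (Fin n)} (hs : s.card ≤ 1) :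
    Finset.univ.filter (fun p : Pair n => p.val.1 ∈ s ∧ p.val.2 ∈ s) = ∅ := by
  rw [Finset.filter_eq_empty_iff]
  rintro p - ⟨h1, h2⟩
  have : ({p.val.1, p.val.2} : Finset (Fin n)) ⊆ s := by
    intro z hz
    simp only [Finset.mem_insert, Finset.mem_singleton] at hz
    rcases hz with rfl | rfl <;> assumption
  have hcard : ({p.val.1, p.val.2} : Finset (Fin n)).card = 2 := by
    rw [Finset.card_insert_of_notMem (by simp [ne_of_lt p.prop]), Finset.card_singleton]
  have := Finset.card_le_card this
  omega

lemma triple_filter_sub_empty {s : Finset (Fin n)} (hs : s.card ≤ 2) :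
    Finset.univ.filter (fun t : Triple n => t.val.1 ∈ s ∧ t.val.2.1 ∈ s ∧ t.val.2.2 ∈ s)
      = ∅ := by
  rw [Finset.filter_eq_empty_iff]
  rintro t - ⟨h1, h2, h3⟩
  have hsub : ({t.val.1, t.val.2.1, t.val.2.2} : Finset (Fin n)) ⊆ s := by
    intro z hz
    simp only [Finset.mem_insert, Finset.mem_singleton] at hz
    rcases hz with rfl | rfl | rfl <;> assumption
  have h12 := t.prop.1
  have h23 := t.prop.2
  have hcard : ({t.val.1, t.val.2.1, t.val.2.2} : Finset (Fin n)).card = 3 := by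
    rw [Finset.card_insert_of_notMem, Finset.card_insert_of_notMem, Finset.card_singleton]
    · simp [ne_of_lt h23]
    · simp only [Finset.mem_insert, Finset.mem_singleton]
      push_neg
      exact ⟨ne_of_lt h12, ne_of_lt (h12.trans h23)⟩
  have := Finset.card_le_card hsub
  omega

lemma Phi_inj {a₀ a₀' : ZMod 8} {a a' : Fin n → ZMod 8} {b b' : Pair n → ZMod 4}
    {c c' : Triple n → ZMod 2} (h : Phi a₀ a b c = Phi a₀' a' b' c') :
    a₀ = a₀' ∧ a = a' ∧ b = b' ∧ c = c' := by
  have heval : ∀ s, Phi a₀ a b c (ind s) = Phi a₀' a' b' c' (ind s) := fun s => congrFun h _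
  have h0 : a₀ = a₀' := by
    have := heval ∅
    rw [Phi_ind, Phi_ind] at this
    simpa [pair_filter_sub_empty (show (∅ : Finset (Fin n)).card ≤ 1 by
        rw [Finset.card_empty]; omega),
      triple_filter_sub_empty (show (∅ : Finset (Fin n)).card ≤ 2 by
        rw [Finset.card_empty]; omega)] using this
  have ha : a = a' := by
    funext i
    have := heval {i}
    rw [Phi_ind, Phi_ind] at this
    rw [pair_filter_sub_empty (show ({i} : Finset (Fin n)).card ≤ 1 by
        rw [Finset.card_singleton]),
      triple_filter_sub_empty (show ({i} : Finset (Fin n)).card ≤ 2 by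
        rw [Finset.card_singleton]; omega)] at this
    simpa [h0] using this
  have hb : b = b' := by
    funext p
    obtain ⟨⟨i, j⟩, hij⟩ := p
    have := heval {i, j}
    rw [Phi_ind, Phi_ind, pair_filter_singleton hij,
      triple_filter_sub_empty (Finset.card_insert_le _ _ |>.trans (by simp)),
      Finset.sum_singleton, Finset.sum_singleton] at this
    rw [h0, ha] at this
    simp only [Finset.sum_empty, add_zero] at this
    exact bval_inj (by exact add_left_cancel this)
  have hc : c = c' := by
    funext t
    obtain ⟨⟨i, j, k⟩, hij, hjk⟩ := t
    have := heval {i, j, k}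
    rw [Phi_ind, Phi_ind, triple_filter_singleton hij hjk,
      Finset.sum_singleton, Finset.sum_singleton] at this
    rw [h0, ha, hb] at this
    exact cval_inj (add_left_cancel this)
  exact ⟨h0, ha, hb, hc⟩

def finTwoEmb {a b : Fin n} (h : a < b) : Fin 2 ↪o Fin n :=
  OrderEmbedding.ofStrictMono (![a, b]) (by
    intro s t hst
    fin_cases s <;> fin_cases t <;>
      first
        | exact absurd hst (by decide)
        | simpa using h)

def finThreeEmb {a b c : Fin n} (h1 : a < b) (h2 : b < c) : Fin 3 ↪o Fin n :=
  OrderEmbedding.ofStrictMono (![a, b, c]) (by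
    intro s t hst
    fin_cases s <;> fin_cases t <;>
      first
        | exact absurd hst (by decide)
        | simpa using h1
        | simpa using h2
        | simpa using h1.trans h2)

lemma card_pair_finset {a b : Fin n} (h : a < b) : ({a, b} : Finset (Fin n)).card = 2 := by
  rw [Finset.card_insert_of_notMem (by simp [ne_of_lt h]), Finset.card_singleton]

lemma card_triple_finset {a b c : Fin n} (h1 : a < b) (h2 : b < c) :
    ({a, b, c} : Finset (Fin n)).card = 3 := by
  rw [Finset.card_insert_of_notMem, Finset.card_insert_of_notMem (by simp [ne_of_lt h2]),
    Finset.card_singleton]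
  simp only [Finset.mem_insert, Finset.mem_singleton]
  push_neg
  exact ⟨ne_of_lt h1, ne_of_lt (h1.trans h2)⟩

def pairEquiv : Pair n ≃ {s : Finset (Fin n) // s.card = 2} where
  toFun p := ⟨{p.val.1, p.val.2}, card_pair_finset p.prop⟩
  invFun s := ⟨(s.val.orderEmbOfFin s.prop 0, s.val.orderEmbOfFin s.prop 1),
    (s.val.orderEmbOfFin s.prop).strictMono (show (0 : Fin 2) < 1 by decide)⟩
  left_inv p := by
    obtain ⟨⟨a, b⟩, hab⟩ := p
    have huniq : finTwoEmb hab = ({a, b} : Finset (Fin n)).orderEmbOfFin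
        (card_pair_finset hab) := by
      apply Finset.orderEmbOfFin_unique'
      intro x
      fin_cases x <;> simp [finTwoEmb, OrderEmbedding.ofStrictMono]
    apply Subtype.ext
    refine Prod.ext ?_ ?_ <;> simp only [] <;> rw [← huniq] <;> simp [finTwoEmb, OrderEmbedding.ofStrictMono]
  right_inv s := by
    obtain ⟨s, hs⟩ := s
    apply Subtype.ext
    apply Finset.coe_injective
    have hr := Finset.range_orderEmbOfFin s hs
    rw [show ((({s.orderEmbOfFin hs 0, s.orderEmbOfFin hs 1} : Finset (Fin n)) : Set (Fin n)))
        = Set.range (s.orderEmbOfFin hs) by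
      ext y
      simp only [Finset.coe_insert, Finset.coe_singleton, Set.mem_insert_iff,
        Set.mem_singleton_iff, Set.mem_range]
      constructor
      · rintro (rfl | rfl)
        exacts [⟨0, rfl⟩, ⟨1, rfl⟩]
      · rintro ⟨t, rfl⟩
        fin_cases t
        · exact Or.inl rfl
        · exact Or.inr rfl]
    rw [hr]

def tripleEquiv : Triple n ≃ {s : Finset (Fin n) // s.card = 3} where
  toFun t := ⟨{t.val.1, t.val.2.1, t.val.2.2}, card_triple_finset t.prop.1 t.prop.2⟩
  invFun s := ⟨(s.val.orderEmbOfFin s.prop 0, s.val.orderEmbOfFin s.prop 1,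
      s.val.orderEmbOfFin s.prop 2),
    (s.val.orderEmbOfFin s.prop).strictMono (show (0 : Fin 3) < 1 by decide),
    (s.val.orderEmbOfFin s.prop).strictMono (show (1 : Fin 3) < 2 by decide)⟩
  left_inv t := by
    obtain ⟨⟨a, b, c⟩, h1, h2⟩ := t
    have huniq : finThreeEmb h1 h2 = ({a, b, c} : Finset (Fin n)).orderEmbOfFin
        (card_triple_finset h1 h2) := by
      apply Finset.orderEmbOfFin_unique'
      intro x
      fin_cases x <;> simp [finThreeEmb, OrderEmbedding.ofStrictMono]
    apply Subtype.ext
    refine Prod.ext ?_ (Prod.ext ?_ ?_) <;> simp only [] <;> rw [← huniq] <;> simp [finThreeEmb, OrderEmbedding.ofStrictMono]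
  right_inv s := by
    obtain ⟨s, hs⟩ := s
    apply Subtype.ext
    apply Finset.coe_injective
    have hr := Finset.range_orderEmbOfFin s hs
    rw [show ((({s.orderEmbOfFin hs 0, s.orderEmbOfFin hs 1, s.orderEmbOfFin hs 2} :
          Finset (Fin n)) : Set (Fin n)))
        = Set.range (s.orderEmbOfFin hs) by
      ext y
      simp only [Finset.coe_insert, Finset.coe_singleton, Set.mem_insert_iff,
        Set.mem_singleton_iff, Set.mem_range]
      constructor
      · rintro (rfl | rfl | rfl)
        exacts [⟨0, rfl⟩, ⟨1, rfl⟩, ⟨2, rfl⟩]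
      · rintro ⟨t, rfl⟩
        fin_cases t
        · exact Or.inl rfl
        · exact Or.inr (Or.inl rfl)
        · exact Or.inr (Or.inr rfl)]
    rw [hr]

lemma card_Pair : Nat.card (Pair n) = n.choose 2 := by
  rw [Nat.card_congr pairEquiv, Nat.card_eq_fintype_card, Fintype.card_finset_len,
    Fintype.card_fin]

lemma card_Triple : Nat.card (Triple n) = n.choose 3 := by
  rw [Nat.card_congr tripleEquiv, Nat.card_eq_fintype_card, Fintype.card_finset_len,
    Fintype.card_fin]

/-- parameters for `PS` -/
abbrev Params (n : ℕ) :=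
  ZMod 8 × (Fin n → ZMod 8) × (Pair n → ZMod 4) × (Triple n → ZMod 2)

def psEquiv : Params n ≃ ↥(PS n) :=
  Equiv.ofBijective (fun q => ⟨Phi q.1 q.2.1 q.2.2.1 q.2.2.2, ⟨_, _, _, _, rfl⟩⟩)
    (by
      constructor
      · rintro ⟨a₀, a, b, c⟩ ⟨a₀', a', b', c'⟩ hq
        obtain ⟨h0, h1, h2, h3⟩ := Phi_inj (congrArg Subtype.val hq)
        simp_all
      · rintro ⟨f, a₀, a, b, c, rfl⟩
        exact ⟨(a₀, a, b, c), rfl⟩)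

lemma card_PS : Nat.card ↥(PS n) =
    8 * 8 ^ n * 4 ^ n.choose 2 * 2 ^ n.choose 3 := by
  rw [← Nat.card_congr (psEquiv (n := n))]
  rw [Nat.card_prod, Nat.card_prod, Nat.card_prod]
  rw [Nat.card_zmod]
  rw [Nat.card_eq_fintype_card (α := Fin n → ZMod 8), Fintype.card_fun]
  rw [Nat.card_eq_fintype_card (α := Pair n → ZMod 4), Fintype.card_fun]
  rw [Nat.card_eq_fintype_card (α := Triple n → ZMod 2), Fintype.card_fun]
  rw [ZMod.card, ZMod.card, ZMod.card, Fintype.card_fin,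
    ← Nat.card_eq_fintype_card (α := Pair n), ← Nat.card_eq_fintype_card (α := Triple n),
    card_Pair, card_Triple]
  ring

def affEquiv : ((V n ≃ₗ[ZMod 2] V n) × V n) ≃ ↥(Aff n) :=
  Equiv.ofBijective (fun q => ⟨q.1.toEquiv.trans (Equiv.addRight q.2), q.1, q.2,
      fun x => rfl⟩)
    (by
      constructor
      · rintro ⟨M, v⟩ ⟨N, w⟩ hq
        have hfun : ∀ x, M x + v = N x + w :=
          fun x => congrFun (congrArg (fun (z : Equiv.Perm (V n)) => (z : V n → V n))
            (congrArg Subtype.val hq)) x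
        have hv : v = w := by
          have := hfun 0
          simpa using this
        subst hv
        have hM : M = N := by
          apply LinearEquiv.toLinearMap_injective
          apply LinearMap.ext
          intro x
          have := hfun x
          exact add_right_cancel this
        rw [hM]
      · rintro ⟨σ, M, v, hM⟩
        exact ⟨(M, v), Subtype.ext (Equiv.ext fun x => (hM x).symm)⟩)

lemma card_lin : Nat.card (V n ≃ₗ[ZMod 2] V n) = ∏ i : Fin n, (2 ^ n - 2 ^ (i : ℕ)) := by
  have e1 : (Matrix.GeneralLinearGroup (Fin n) (ZMod 2)) ≃
      ((V n →ₗ[ZMod 2] V n))ˣ :=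
    (Units.mapEquiv (Matrix.toLinAlgEquiv' : Matrix (Fin n) (Fin n) (ZMod 2) ≃ₐ[ZMod 2]
      ((Fin n → ZMod 2) →ₗ[ZMod 2] (Fin n → ZMod 2))).toMulEquiv).toEquiv
  have e2 : ((V n →ₗ[ZMod 2] V n))ˣ ≃ (V n ≃ₗ[ZMod 2] V n) :=
    (LinearMap.GeneralLinearGroup.generalLinearEquiv (ZMod 2) (V n)).toEquiv
  rw [← Nat.card_congr (e1.trans e2)]
  rw [Matrix.card_GL_field]
  simp [ZMod.card]

def bigEquiv : ((↥(PS n)) × (↥(Aff n))) ≃ ↥(dihedralGroup' n) :=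
  Equiv.ofBijective (fun q => ⟨Dop q.1.val * Pop q.2.val, by
      rw [closure_eq_H]
      exact ⟨q.1.val, q.1.prop, q.2.val, q.2.prop, rfl⟩⟩)
    (by
      constructor
      · rintro ⟨f, σ⟩ ⟨g, τ⟩ hq
        obtain ⟨h1, h2⟩ := DP_inj (congrArg Subtype.val hq)
        simp only [Prod.mk.injEq]
        exact ⟨Subtype.ext h1, Subtype.ext h2⟩
      · rintro ⟨W, hW⟩
        rw [closure_eq_H] at hW
        obtain ⟨f, hf, σ, hσ, rfl⟩ := hW
        exact ⟨⟨⟨f, hf⟩, ⟨σ, hσ⟩⟩, rfl⟩)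

lemma prod_shift (f : ℕ → ℕ) (n : ℕ) :
    ∏ i ∈ Finset.Icc 1 n, f i = ∏ i ∈ Finset.range n, f (i + 1) := by
  induction n with
  | zero => simp
  | succ m ih =>
    rw [Finset.prod_Icc_succ_top (by omega), ih, Finset.prod_range_succ]

end CD

theorem stmt11 {n : ℕ} (hn : 1 ≤ n) :
    Finite (dihedralGroup' n) ∧
    Nat.card (dihedralGroup' n) =
      2 ^ (3 + 4 * n + 2 * n.choose 2 + n.choose 3) *
        ∏ i ∈ Finset.Icc 1 n, (2 ^ n - 2 ^ (i - 1)) := by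
  constructor
  · exact Finite.of_equiv _ CD.bigEquiv
  · have hcard : Nat.card (dihedralGroup' n)
        = Nat.card ↥(CD.PS n) * Nat.card ↥(CD.Aff n) := by
      rw [← Nat.card_congr (CD.bigEquiv (n := n)), Nat.card_prod]
    have hAff : Nat.card ↥(CD.Aff n)
        = (∏ i : Fin n, (2 ^ n - 2 ^ (i : ℕ))) * 2 ^ n := by
      rw [← Nat.card_congr (CD.affEquiv (n := n)), Nat.card_prod, CD.card_lin]
      congr 1
      rw [Nat.card_eq_fintype_card, Fintype.card_fun, ZMod.card, Fintype.card_fin]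
    have hprod : (∏ i ∈ Finset.Icc 1 n, (2 ^ n - 2 ^ (i - 1)))
        = ∏ i ∈ Finset.range n, (2 ^ n - 2 ^ i) := by
      rw [CD.prod_shift (fun i => 2 ^ n - 2 ^ (i - 1)) n]
      exact Finset.prod_congr rfl fun i _ => by simp
    have hfin : (∏ i : Fin n, (2 ^ n - 2 ^ (i : ℕ)))
        = ∏ i ∈ Finset.range n, (2 ^ n - 2 ^ i) := Fin.prod_univ_eq_prod_range (fun i => 2 ^ n - 2 ^ i) n
    have hpow : 8 * 8 ^ n * 4 ^ n.choose 2 * 2 ^ n.choose 3 * 2 ^ n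
        = 2 ^ (3 + 4 * n + 2 * n.choose 2 + n.choose 3) := by
      rw [show (8 : ℕ) = 2 ^ 3 from rfl, show (4 : ℕ) = 2 ^ 2 from rfl,
        ← pow_mul, ← pow_mul, ← pow_add, ← pow_add, ← pow_add, ← pow_add]
      congr 1
      ring
    rw [hcard, CD.card_PS, hAff, hprod, ← hpow, hfin]
    ring
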